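/- arXiv:2401.01611 — 2 statements merged into one kernel-verified Lean document; each statement's English description precedes it below -/
import Mathlib

section
/- Let {q_n} be symmetric positive semidefinite matrices in ℝ^{A×A} converging to q, let {m_n} be positive integers and {v_n} positive reals with v_n → ∞ and m_n/v_n → γ for some γ ∈ [1,∞). For each n let G_n ∈ ℝ^{A×A} be the random matrix G_{n;αβ} := C_b + (C_W/m_n) Σ_{j=1}^{m_n} σ(⟨q_n^{#}_{α·}, N_{j·}⟩) σ(⟨q_n^{#}_{β·}, N_{j·}⟩), built from independent standard Normals {N_{jγ}}. Then for every η ∈ ℝ^{A×A}, lim_{n→∞} (1/v_n) log E[exp(v_n Σ_{α,β} η_{αβ} G_{n;αβ})] = C_b Σ_{α,β} η_{αβ} + γ κ((C_W/γ)η ; q). -/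
open MeasureTheory ProbabilityTheory
open scoped Classical

/-- The positive semidefinite square root `q^#` of a positive semidefinite matrix `q`
(extended by `0` outside the positive semidefinite matrices). -/
noncomputable def psdSqrt {A : Type*} [Fintype A] [DecidableEq A]
    (q : Matrix A A ℝ) : Matrix A A ℝ :=
  if h : q.PosSemidef then
    h.1.eigenvectorUnitary.1 * Matrix.diagonal ((↑) ∘ (√·) ∘ h.1.eigenvalues) *
      (star h.1.eigenvectorUnitary : Matrix A A ℝ) else 0

/-- The joint law of the i.i.d. standard Normal family `(N_γ)_{γ ∈ A}`. -/
noncomputable def stdGaussPi (A : Type*) [Fintype A] : Measure (A → ℝ) :=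
  Measure.pi fun _ => gaussianReal 0 1

/-- `κ(η;q) := log E[exp(∑_{α,β∈A} η_{αβ} σ(⟨q^#_{α·},N⟩) σ(⟨q^#_{β·},N⟩))]`, where
`(N_γ)_{γ∈A}` are independent standard Normal random variables and
`⟨q^#_{γ·},N⟩ = ∑_{γ'} q^#_{γγ'} N_{γ'}`. -/
noncomputable def kappaFn {A : Type*} [Fintype A] [DecidableEq A]
    (σ : ℝ → ℝ) (η : A → A → ℝ) (q : Matrix A A ℝ) : ℝ :=
  Real.log (∫ z : A → ℝ, Real.exp (∑ α, ∑ β, η α β *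
      σ (∑ γ, psdSqrt q α γ * z γ) * σ (∑ γ, psdSqrt q β γ * z γ))
    ∂(stdGaussPi A))

section Aux

open Filter
open scoped Matrix

instance stdGaussPi.instIsProbabilityMeasure (A : Type*) [Fintype A] :
    IsProbabilityMeasure (stdGaussPi A) := by
  unfold stdGaussPi; infer_instance

variable {Ω : Type*} [MeasurableSpace Ω] {μ : Measure Ω}
variable {A : Type*} [Fintype A]

lemma rows_iIndepFun
    (N : ℕ → A → Ω → ℝ) (hNmeas : ∀ j g, Measurable (N j g))
    (hNindep : iIndepFun (fun p : ℕ × A => N p.1 p.2) μ) :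
    iIndepFun
      (fun j => fun ω γ => N j γ ω) μ := by
  classical
  have hYmeas : ∀ j, Measurable (fun ω γ => N j γ ω : Ω → A → ℝ) :=
    fun j => measurable_pi_lambda _ fun γ => hNmeas j γ
  rw [iIndepFun_iff_iIndep]
  set π : ℕ → Set (Set Ω) := fun j =>
    {t | ∃ s : A → Set ℝ, (∀ γ, MeasurableSet (s γ)) ∧ t = ⋂ γ, N j γ ⁻¹' s γ} with hπ
  refine iIndepSets.iIndep (fun j => (hYmeas j).comap_le) π ?_ ?_ ?_
  · rintro j t1 ⟨s1, hs1, rfl⟩ t2 ⟨s2, hs2, rfl⟩ _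
    refine ⟨fun γ => s1 γ ∩ s2 γ, fun γ => (hs1 γ).inter (hs2 γ), ?_⟩
    ext ω; simp only [Set.mem_inter_iff, Set.mem_iInter, Set.mem_preimage]; aesop
  · intro j
    rw [← generateFrom_pi, MeasurableSpace.comap_generateFrom]
    congr 1
    ext t
    constructor
    · rintro ⟨u, ⟨s, hs, rfl⟩, rfl⟩
      exact ⟨s, fun γ => hs γ (Set.mem_univ γ), by ext ω; simp [Set.mem_pi]⟩
    · rintro ⟨s, hs, rfl⟩
      exact ⟨Set.univ.pi s, ⟨s, fun γ _ => hs γ, rfl⟩, by ext ω; simp [Set.mem_pi]⟩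
  · rw [iIndepSets_iff]
    intro S f hf
    have hchoice : ∀ j ∈ S, ∃ s : A → Set ℝ, (∀ γ, MeasurableSet (s γ)) ∧
        f j = ⋂ γ, N j γ ⁻¹' s γ := fun j hj => hf j hj
    set s : ℕ → A → Set ℝ := fun j => if h : j ∈ S then (hchoice j h).choose
      else fun _ => Set.univ with hs
    have hsm : ∀ j γ, MeasurableSet (s j γ) := by
      intro j γ
      by_cases hj : j ∈ S
      · simp only [s, dif_pos hj]; exact (hchoice j hj).choose_spec.1 γ
      · simp only [s, dif_neg hj]; exact MeasurableSet.univ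
    have hfs : ∀ j ∈ S, f j = ⋂ γ, N j γ ⁻¹' s j γ := by
      intro j hj; simp only [s, dif_pos hj]; exact (hchoice j hj).choose_spec.2
    have key : ∀ T : Finset (ℕ × A), μ (⋂ p ∈ T, N p.1 p.2 ⁻¹' s p.1 p.2)
        = ∏ p ∈ T, μ (N p.1 p.2 ⁻¹' s p.1 p.2) := by
      intro T
      refine hNindep.meas_biInter (S := T) fun p _ => ?_
      exact MeasurableSpace.measurableSet_comap.2 ⟨s p.1 p.2, hsm p.1 p.2, rfl⟩
    have hrow : ∀ j ∈ S, μ (f j) = ∏ γ, μ (N j γ ⁻¹' s j γ) := by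
      intro j hj
      rw [hfs j hj]
      have h1 : (⋂ γ, N j γ ⁻¹' s j γ)
          = ⋂ p ∈ (({j} : Finset ℕ) ×ˢ Finset.univ), N p.1 p.2 ⁻¹' s p.1 p.2 := by
        ext ω; simp
      rw [h1, key]
      rw [Finset.prod_product]
      simp
    have h2 : (⋂ j ∈ S, f j) = ⋂ p ∈ (S ×ˢ (Finset.univ : Finset A)),
        N p.1 p.2 ⁻¹' s p.1 p.2 := by
      ext ω
      simp only [Set.mem_iInter, Finset.mem_product, Finset.mem_univ, and_true]
      constructor
      · rintro h ⟨j, γ⟩ hj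
        have := h j hj; rw [hfs j hj] at this
        exact Set.mem_iInter.1 this γ
      · intro h j hj
        rw [hfs j hj]
        exact Set.mem_iInter.2 fun γ => h (j, γ) hj
    rw [h2, key, Finset.prod_product]
    exact Finset.prod_congr rfl fun j hj => (hrow j hj).symm

lemma row_law (N : ℕ → A → Ω → ℝ) (hNmeas : ∀ j g, Measurable (N j g))
    (hN : ∀ j g, Measure.map (N j g) μ = gaussianReal 0 1)
    (hNindep : iIndepFun (fun p : ℕ × A => N p.1 p.2) μ)
    (j : ℕ) :
    Measure.map (fun ω γ => N j γ ω) μ = stdGaussPi A := by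
  classical
  have hYmeas : Measurable (fun ω γ => N j γ ω : Ω → A → ℝ) :=
    measurable_pi_lambda _ fun γ => hNmeas j γ
  refine (Measure.pi_eq fun s hs => ?_).symm
  rw [Measure.map_apply hYmeas (MeasurableSet.univ_pi hs)]
  have h1 : (fun ω γ => N j γ ω) ⁻¹' Set.univ.pi s
      = ⋂ p ∈ (({j} : Finset ℕ) ×ˢ (Finset.univ : Finset A)), N p.1 p.2 ⁻¹' s p.2 := by
    ext ω; simp [Set.mem_pi]
  rw [h1, hNindep.meas_biInter (fun p _ =>
    MeasurableSpace.measurableSet_comap.2 ⟨s p.2, hs p.2, rfl⟩), Finset.prod_product]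
  simp only [Finset.prod_singleton]
  refine Finset.prod_congr rfl fun γ _ => ?_
  rw [← hN j γ, Measure.map_apply (hNmeas j γ) (hs γ)]

lemma integral_prod_range [IsProbabilityMeasure μ] {f : ℕ → Ω → ℝ}
    (hindep : iIndepFun f μ)
    (hmeas : ∀ j, Measurable (f j)) (n : ℕ) :
    ∫ ω, ∏ j ∈ Finset.range n, f j ω ∂μ = ∏ j ∈ Finset.range n, ∫ ω, f j ω ∂μ := by
  induction n with
  | zero => simp
  | succ n ih =>
    have hfin : Measurable (∏ j ∈ Finset.range n, f j) := by
      rw [Finset.prod_fn]; exact Finset.measurable_prod _ fun j _ => hmeas j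
    have h := (hindep.indepFun_prod_range_succ hmeas n).integral_mul_eq_mul_integral
      hfin.aestronglyMeasurable (hmeas n).aestronglyMeasurable
    simp only [Finset.prod_range_succ]
    rw [← ih]
    have e1 : ∫ ω, (∏ j ∈ Finset.range n, f j ω) * f n ω ∂μ
        = integral μ ((∏ j ∈ Finset.range n, f j) * f n) := by
      congr 1; ext ω; simp [Finset.prod_apply]
    have e2 : ∫ ω, ∏ j ∈ Finset.range n, f j ω ∂μ
        = integral μ (∏ j ∈ Finset.range n, f j) := by
      congr 1; ext ω; simp [Finset.prod_apply]
    rw [e1, h, e2]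

end Aux

section Analytic

open Filter
open scoped Matrix
open scoped MatrixOrder

variable {A : Type*} [Fintype A] [DecidableEq A]

lemma psdSqrt_eq {q : Matrix A A ℝ} (hq : q.PosSemidef) : psdSqrt q = CFC.sqrt q := by
  rw [CFC.sqrt_eq_cfc, cfc_nnreal_eq_real _ q hq.nonneg, hq.1.cfc_eq]
  simp only [psdSqrt, dif_pos hq, Matrix.IsHermitian.cfc, Unitary.conjStarAlgAut_apply]
  congr 2
  ext i j
  simp [Matrix.diagonal_apply, max_eq_left (hq.eigenvalues_nonneg i)]

lemma psdSqrt_posSemidef {q : Matrix A A ℝ} (hq : q.PosSemidef) : (psdSqrt q).PosSemidef := by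
  rw [psdSqrt_eq hq]; exact Matrix.nonneg_iff_posSemidef.mp (CFC.sqrt_nonneg q)

lemma psdSqrt_mul_self {q : Matrix A A ℝ} (hq : q.PosSemidef) : psdSqrt q * psdSqrt q = q := by
  rw [psdSqrt_eq hq]; exact CFC.sqrt_mul_sqrt_self q hq.nonneg

lemma psdSqrt_entry_sq_le {q : Matrix A A ℝ} (hq : q.PosSemidef) (α β : A) :
    (psdSqrt q α β) ^ 2 ≤ q α α := by
  have hs := psdSqrt_posSemidef hq
  have h1 : (psdSqrt q * psdSqrt q) α α = ∑ γ, psdSqrt q α γ * psdSqrt q γ α :=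
    Matrix.mul_apply
  have hsym : ∀ γ, psdSqrt q γ α = psdSqrt q α γ := by
    intro γ
    have := hs.1
    conv_lhs => rw [← this]
    simp [Matrix.conjTranspose_apply]
  rw [psdSqrt_mul_self hq] at h1
  have h2 : q α α = ∑ γ, (psdSqrt q α γ) ^ 2 := by
    rw [h1]; refine Finset.sum_congr rfl fun γ _ => ?_; rw [hsym γ]; ring
  rw [h2]
  exact Finset.single_le_sum (f := fun γ => (psdSqrt q α γ)^2)
    (fun γ _ => sq_nonneg _) (Finset.mem_univ β)

lemma psdSqrt_tendsto {q : ℕ → Matrix A A ℝ} (hq : ∀ k, (q k).PosSemidef)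
    {qlim : Matrix A A ℝ} (hqlim : qlim.PosSemidef)
    (hqconv : Tendsto q atTop (nhds qlim)) :
    Tendsto (fun k => psdSqrt (q k)) atTop (nhds (psdSqrt qlim)) := by
  classical
  have hdiag : ∀ α : A, Tendsto (fun k => Real.sqrt (q k α α)) atTop
      (nhds (Real.sqrt (qlim α α))) :=
    fun α => (Real.continuous_sqrt.tendsto _).comp
      (((continuous_id.matrix_elem α α).tendsto qlim).comp hqconv)
  have hbdd : ∀ α : A, ∃ c : ℝ, ∀ k, Real.sqrt (q k α α) ≤ c := by
    intro α
    obtain ⟨c, hc⟩ := (hdiag α).bddAbove_range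
    exact ⟨c, fun k => hc ⟨k, rfl⟩⟩
  choose c hc using hbdd
  set K : Set (Matrix A A ℝ) := Set.univ.pi fun α => Set.univ.pi fun _ => Set.Icc (-(c α)) (c α)
    with hK
  have hKcompact : IsCompact K :=
    isCompact_univ_pi fun α => isCompact_univ_pi fun _ => isCompact_Icc
  have hmem : ∀ k, psdSqrt (q k) ∈ K := by
    intro k
    intro α _
    intro β _
    have h1 : (psdSqrt (q k) α β) ^ 2 ≤ q k α α := psdSqrt_entry_sq_le (hq k) α β
    have h2 : |psdSqrt (q k) α β| ≤ Real.sqrt (q k α α) := by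
      rw [← Real.sqrt_sq_eq_abs]
      exact Real.sqrt_le_sqrt h1
    have h3 : |psdSqrt (q k) α β| ≤ c α := h2.trans (hc α k)
    exact abs_le.1 h3
  haveI : FirstCountableTopology (Matrix A A ℝ) :=
    (inferInstance : FirstCountableTopology (A → A → ℝ))
  refine tendsto_of_subseq_tendsto fun ns hns => ?_
  obtain ⟨L, hLK, φ, hφ, hLtendsto⟩ := hKcompact.tendsto_subseq (x := fun n => psdSqrt (q (ns n)))
    (fun n => hmem (ns n))
  refine ⟨φ, ?_⟩
  have hq' : Tendsto (fun n => q (ns (φ n))) atTop (nhds qlim) :=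
    hqconv.comp (hns.comp hφ.tendsto_atTop)
  have hLpsd : L.PosSemidef := by
    refine Matrix.PosSemidef.of_dotProduct_mulVec_nonneg ?_ ?_
    · have htr : Tendsto (fun n => (psdSqrt (q (ns (φ n))))ᴴ) atTop (nhds Lᴴ) :=
        ((continuous_id.matrix_conjTranspose).tendsto L).comp hLtendsto
      have heq : ∀ n, (psdSqrt (q (ns (φ n))))ᴴ = psdSqrt (q (ns (φ n))) :=
        fun n => (psdSqrt_posSemidef (hq (ns (φ n)))).1
      rw [show Tendsto (fun n => (psdSqrt (q (ns (φ n))))ᴴ) atTop (nhds Lᴴ)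
        = Tendsto (fun n => psdSqrt (q (ns (φ n)))) atTop (nhds Lᴴ) from by
          simp only [heq]] at htr
      exact tendsto_nhds_unique htr hLtendsto
    · intro x
      have hcont : Continuous fun M : Matrix A A ℝ => star x ⬝ᵥ (M *ᵥ x) :=
        (continuous_const.dotProduct (continuous_id.matrix_mulVec continuous_const))
      have h1 : Tendsto (fun n => star x ⬝ᵥ ((psdSqrt (q (ns (φ n)))) *ᵥ x)) atTop
          (nhds (star x ⬝ᵥ (L *ᵥ x))) := (hcont.tendsto L).comp hLtendsto
      exact ge_of_tendsto' h1 fun n => (psdSqrt_posSemidef (hq (ns (φ n)))).dotProduct_mulVec_nonneg x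
  have hLL : L ^ 2 = qlim := by
    have h1 : Tendsto (fun n => psdSqrt (q (ns (φ n))) * psdSqrt (q (ns (φ n)))) atTop
        (nhds (L * L)) := ((continuous_id.matrix_mul continuous_id).tendsto L).comp hLtendsto
    have h2 : ∀ n, psdSqrt (q (ns (φ n))) * psdSqrt (q (ns (φ n))) = q (ns (φ n)) :=
      fun n => psdSqrt_mul_self (hq (ns (φ n)))
    simp only [h2] at h1
    rw [pow_two]
    exact tendsto_nhds_unique h1 hq'
  have : L = psdSqrt qlim := by
    rw [psdSqrt_eq hqlim]
    exact (CFC.sqrt_unique (by rw [← pow_two]; exact hLL) hLpsd.nonneg).symm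
  rw [← this]
  exact hLtendsto

/-- The inner double sum. -/
noncomputable def Xfun (σ : ℝ → ℝ) (η : A → A → ℝ) (s : Matrix A A ℝ) (z : A → ℝ) : ℝ :=
  ∑ α, ∑ β, η α β * σ (∑ γ', s α γ' * z γ') * σ (∑ γ', s β γ' * z γ')

/-- The one-neuron moment generating integral. -/
noncomputable def Ifun (σ : ℝ → ℝ) (η : A → A → ℝ) (c : ℝ) (s : Matrix A A ℝ) : ℝ :=
  ∫ z : A → ℝ, Real.exp (c * Xfun σ η s z) ∂(stdGaussPi A)

variable {σ : ℝ → ℝ} {η : A → A → ℝ} {M : ℝ}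

lemma Xfun_cont_z (hσ : Continuous σ) (s : Matrix A A ℝ) :
    Continuous fun z : A → ℝ => Xfun σ η s z := by
  refine continuous_finset_sum _ fun α _ => continuous_finset_sum _ fun β _ => ?_
  have hlin : ∀ δ : A, Continuous fun z : A → ℝ => ∑ γ', s δ γ' * z γ' :=
    fun δ => continuous_finset_sum _ fun γ' _ => continuous_const.mul (continuous_apply γ')
  exact (continuous_const.mul (hσ.comp (hlin α))).mul (hσ.comp (hlin β))

lemma Xfun_abs_le (hM : ∀ y, |σ y| ≤ M) (s : Matrix A A ℝ) (z : A → ℝ) :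
    |Xfun σ η s z| ≤ ∑ α, ∑ β, |η α β| * (M * M) := by
  have hM0 : 0 ≤ M := le_trans (abs_nonneg _) (hM 0)
  calc |Xfun σ η s z| ≤ ∑ α, |∑ β, η α β * σ (∑ γ', s α γ' * z γ') * σ (∑ γ', s β γ' * z γ')| :=
        Finset.abs_sum_le_sum_abs _ _
    _ ≤ ∑ α, ∑ β, |η α β * σ (∑ γ', s α γ' * z γ') * σ (∑ γ', s β γ' * z γ')| :=
        Finset.sum_le_sum fun α _ => Finset.abs_sum_le_sum_abs _ _
    _ ≤ ∑ α, ∑ β, |η α β| * (M * M) := by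
        refine Finset.sum_le_sum fun α _ => Finset.sum_le_sum fun β _ => ?_
        rw [abs_mul, abs_mul, mul_assoc]
        exact mul_le_mul_of_nonneg_left
          (mul_le_mul (hM _) (hM _) (abs_nonneg _) hM0) (abs_nonneg _)

lemma exp_Xfun_le (hM : ∀ y, |σ y| ≤ M) (c : ℝ) (s : Matrix A A ℝ) (z : A → ℝ) :
    Real.exp (c * Xfun σ η s z) ≤ Real.exp (|c| * ∑ α, ∑ β, |η α β| * (M * M)) := by
  refine Real.exp_le_exp.2 ?_
  calc c * Xfun σ η s z ≤ |c * Xfun σ η s z| := le_abs_self _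
    _ = |c| * |Xfun σ η s z| := abs_mul _ _
    _ ≤ |c| * ∑ α, ∑ β, |η α β| * (M * M) :=
        mul_le_mul_of_nonneg_left (Xfun_abs_le hM s z) (abs_nonneg _)

lemma exp_Xfun_ge (hM : ∀ y, |σ y| ≤ M) (c : ℝ) (s : Matrix A A ℝ) (z : A → ℝ) :
    Real.exp (-(|c| * ∑ α, ∑ β, |η α β| * (M * M))) ≤ Real.exp (c * Xfun σ η s z) := by
  refine Real.exp_le_exp.2 ?_
  have h1 : |c * Xfun σ η s z| ≤ |c| * ∑ α, ∑ β, |η α β| * (M * M) := by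
    rw [abs_mul]
    exact mul_le_mul_of_nonneg_left (Xfun_abs_le hM s z) (abs_nonneg _)
  have h2 := neg_abs_le (c * Xfun σ η s z)
  linarith

lemma Ifun_integrable (hσ : Continuous σ) (hM : ∀ y, |σ y| ≤ M) (c : ℝ) (s : Matrix A A ℝ) :
    Integrable (fun z : A → ℝ => Real.exp (c * Xfun σ η s z)) (stdGaussPi A) := by
  have hcont : Continuous fun z : A → ℝ => Real.exp (c * Xfun σ η s z) :=
    Real.continuous_exp.comp (continuous_const.mul (Xfun_cont_z hσ s))
  refine (integrable_const (Real.exp (|c| * ∑ α, ∑ β, |η α β| * (M * M)))).mono'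
    hcont.aestronglyMeasurable (Filter.Eventually.of_forall fun z => ?_)
  rw [Real.norm_eq_abs, abs_of_pos (Real.exp_pos _)]
  exact exp_Xfun_le hM c s z

lemma Ifun_pos (hσ : Continuous σ) (hM : ∀ y, |σ y| ≤ M) (c : ℝ) (s : Matrix A A ℝ) :
    0 < Ifun σ η c s := by
  have h1 : Real.exp (-(|c| * ∑ α, ∑ β, |η α β| * (M * M)))
      ≤ Ifun σ η c s := by
    have := integral_mono (μ := stdGaussPi A)
      (integrable_const (Real.exp (-(|c| * ∑ α, ∑ β, |η α β| * (M * M)))))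
      (Ifun_integrable hσ hM c s) (fun z => exp_Xfun_ge hM c s z)
    simpa [Ifun] using this
  exact lt_of_lt_of_le (Real.exp_pos _) h1

set_option maxHeartbeats 2000000 in
lemma Ifun_tendsto (hσ : Continuous σ) (hM : ∀ y, |σ y| ≤ M)
    {c : ℕ → ℝ} {clim : ℝ} (hc : Tendsto c atTop (nhds clim))
    {s : ℕ → Matrix A A ℝ} {slim : Matrix A A ℝ} (hs : Tendsto s atTop (nhds slim)) :
    Tendsto (fun k => Ifun σ η (c k) (s k)) atTop (nhds (Ifun σ η clim slim)) := by
  obtain ⟨B, hB⟩ := (hc.abs).bddAbove_range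
  have hBb : ∀ k, |c k| ≤ B := fun k => hB ⟨k, rfl⟩
  refine tendsto_integral_of_dominated_convergence
    (bound := fun _ => Real.exp (B * ∑ α, ∑ β, |η α β| * (M * M))) ?_ ?_ ?_ ?_
  · intro k
    exact (Real.continuous_exp.comp
      (continuous_const.mul (Xfun_cont_z hσ (s k)))).aestronglyMeasurable
  · exact integrable_const _
  · intro k
    refine Filter.Eventually.of_forall fun z => ?_
    rw [Real.norm_eq_abs, abs_of_pos (Real.exp_pos _)]
    refine le_trans (exp_Xfun_le hM (c k) (s k) z) (Real.exp_le_exp.2 ?_)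
    refine mul_le_mul_of_nonneg_right (hBb k) ?_
    refine Finset.sum_nonneg fun α _ => Finset.sum_nonneg fun β _ => ?_
    have hM0 : 0 ≤ M := le_trans (abs_nonneg _) (hM 0)
    positivity
  · refine Filter.Eventually.of_forall fun z => ?_
    have hXc : Continuous fun s' : Matrix A A ℝ => Xfun σ η s' z := by
      refine continuous_finset_sum _ fun α _ => continuous_finset_sum _ fun β _ => ?_
      have hlin : ∀ δ : A, Continuous fun s' : Matrix A A ℝ => ∑ γ', s' δ γ' * z γ' :=
        fun δ => continuous_finset_sum _ fun γ' _ =>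
          (continuous_id.matrix_elem δ γ').mul continuous_const
      exact (continuous_const.mul (hσ.comp (hlin α))).mul (hσ.comp (hlin β))
    have h1 : Tendsto (fun k => Xfun σ η (s k) z) atTop (nhds (Xfun σ η slim z)) :=
      (hXc.tendsto slim).comp hs
    exact (Real.continuous_exp.tendsto _).comp (hc.mul h1)

lemma scalar_expand (R : Finset ℕ) (vv cb d : ℝ) (η : A → A → ℝ) (t : ℕ → A → A → ℝ) :
    vv * ∑ α, ∑ β, η α β * (cb + d * ∑ j ∈ R, t j α β)
      = vv * cb * (∑ α, ∑ β, η α β) + ∑ j ∈ R, (vv * d) * ∑ α, ∑ β, η α β * t j α β := by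
  have h1 : ∀ α β, η α β * (cb + d * ∑ j ∈ R, t j α β)
      = η α β * cb + ∑ j ∈ R, d * (η α β * t j α β) := by
    intro α β
    rw [mul_add, Finset.mul_sum, Finset.mul_sum]
    congr 1
    exact Finset.sum_congr rfl fun j _ => by ring
  simp only [h1, Finset.sum_add_distrib, mul_add]
  congr 1
  · simp only [← Finset.sum_mul]; ring
  · have hswap : ∑ α, ∑ β, ∑ j ∈ R, d * (η α β * t j α β)
        = ∑ j ∈ R, ∑ α, ∑ β, d * (η α β * t j α β) := by
      rw [show (∑ α : A, ∑ β : A, ∑ j ∈ R, d * (η α β * t j α β))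
          = ∑ α : A, ∑ j ∈ R, ∑ β : A, d * (η α β * t j α β) from
        Finset.sum_congr rfl fun α _ => Finset.sum_comm]
      exact Finset.sum_comm
    rw [hswap, Finset.mul_sum]
    refine Finset.sum_congr rfl fun j _ => ?_
    simp only [← Finset.mul_sum]
    ring

lemma kappaFn_eq_log_Ifun (σ : ℝ → ℝ) (c : ℝ) (η : A → A → ℝ) (q : Matrix A A ℝ) :
    kappaFn σ (fun α β => c * η α β) q = Real.log (Ifun σ η c (psdSqrt q)) := by
  unfold kappaFn Ifun
  refine congrArg Real.log ?_
  refine integral_congr_ae (Filter.Eventually.of_forall fun z => ?_)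
  refine congrArg Real.exp ?_
  unfold Xfun
  rw [Finset.mul_sum]
  refine Finset.sum_congr rfl fun α _ => ?_
  rw [Finset.mul_sum]
  exact Finset.sum_congr rfl fun β _ => by ring

end Analytic



set_option maxHeartbeats 1000000 in
/-- Let `q_n → q` be symmetric positive semidefinite matrices, `m_n`
positive integers and `v_n` positive reals with `v_n → ∞` and `m_n/v_n → γ ∈ [1,∞)`.
For random matrices `G_{n;αβ} = C_b + (C_W/m_n) ∑_{j<m_n} σ(⟨q_n^#_{α·},N_{j·}⟩)
σ(⟨q_n^#_{β·},N_{j·}⟩)` built from independent standard Normals,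
`(1/v_n) log E[exp(v_n ∑_{α,β} η_{αβ} G_{n;αβ})] → C_b ∑_{α,β} η_{αβ} + γ κ((C_W/γ)η ; q)`. -/
theorem scaled_logMgf_tendsto
    {Ω : Type*} [MeasurableSpace Ω] (μ : Measure Ω) [IsProbabilityMeasure μ]
    {A : Type*} [Fintype A] [DecidableEq A]
    (Cb CW : ℝ) (hCb : 0 ≤ Cb) (hCW : 0 < CW)
    (σ : ℝ → ℝ) (hσ : Continuous σ) (hσbd : ∃ M, ∀ y, |σ y| ≤ M)
    (q : ℕ → Matrix A A ℝ) (hq : ∀ k, (q k).PosSemidef)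
    (qlim : Matrix A A ℝ) (hqlim : qlim.PosSemidef)
    (hqconv : Filter.Tendsto q Filter.atTop (nhds qlim))
    (m : ℕ → ℕ) (hm : ∀ k, 1 ≤ m k)
    (v : ℕ → ℝ) (hv : ∀ k, 0 < v k)
    (hvtop : Filter.Tendsto v Filter.atTop Filter.atTop)
    (γ : ℝ) (hγ : 1 ≤ γ)
    (hmv : Filter.Tendsto (fun k => (m k : ℝ) / v k) Filter.atTop (nhds γ))
    (N : ℕ → A → Ω → ℝ)
    (hNmeas : ∀ j g, Measurable (N j g))
    (hN : ∀ j g, Measure.map (N j g) μ = gaussianReal 0 1)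
    (hNindep : iIndepFun
      (fun p : ℕ × A => N p.1 p.2) μ)
    (η : A → A → ℝ) :
    Filter.Tendsto
      (fun k => (1 / v k) * Real.log (∫ ω, Real.exp (v k * ∑ α, ∑ β, η α β *
          (Cb + CW / (m k : ℝ) * ∑ j ∈ Finset.range (m k),
            σ (∑ γ', psdSqrt (q k) α γ' * N j γ' ω) *
            σ (∑ γ', psdSqrt (q k) β γ' * N j γ' ω))) ∂μ))
      Filter.atTop
      (nhds (Cb * (∑ α, ∑ β, η α β)
        + γ * kappaFn σ (fun α β => CW / γ * η α β) qlim)) := by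
  classical
  obtain ⟨M, hM⟩ := hσbd
  have hγpos : (0:ℝ) < γ := lt_of_lt_of_le one_pos hγ
  have hmpos : ∀ k, (0:ℝ) < (m k : ℝ) := fun k => by
    exact_mod_cast Nat.lt_of_lt_of_le Nat.zero_lt_one (hm k)
  have hctend : Filter.Tendsto (fun k => v k * (CW / (m k : ℝ))) Filter.atTop
      (nhds (CW / γ)) := by
    have h1 : Filter.Tendsto (fun k => ((m k : ℝ) / v k)⁻¹) Filter.atTop (nhds γ⁻¹) :=
      hmv.inv₀ (ne_of_gt hγpos)
    have h2 : Filter.Tendsto (fun k => CW * ((m k : ℝ) / v k)⁻¹) Filter.atTop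
        (nhds (CW * γ⁻¹)) := h1.const_mul CW
    have heq : (fun k => CW * ((m k : ℝ) / v k)⁻¹) = fun k => v k * (CW / (m k : ℝ)) := by
      funext k
      rw [inv_div]
      ring
    rw [heq, ← div_eq_mul_inv] at h2
    exact h2
  have hstend : Filter.Tendsto (fun k => psdSqrt (q k)) Filter.atTop
      (nhds (psdSqrt qlim)) := psdSqrt_tendsto hq hqlim hqconv
  have hIpos : ∀ k, 0 < Ifun σ η (v k * (CW / (m k : ℝ))) (psdSqrt (q k)) :=
    fun k => Ifun_pos hσ hM _ _
  have hIlimpos : 0 < Ifun σ η (CW / γ) (psdSqrt qlim) := Ifun_pos hσ hM _ _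
  have hItend : Filter.Tendsto (fun k => Ifun σ η (v k * (CW / (m k : ℝ))) (psdSqrt (q k)))
      Filter.atTop (nhds (Ifun σ η (CW / γ) (psdSqrt qlim))) :=
    Ifun_tendsto hσ hM hctend hstend
  have key : ∀ k, (1 / v k) * Real.log (∫ ω, Real.exp (v k * ∑ α, ∑ β, η α β *
          (Cb + CW / (m k : ℝ) * ∑ j ∈ Finset.range (m k),
            σ (∑ γ', psdSqrt (q k) α γ' * N j γ' ω) *
            σ (∑ γ', psdSqrt (q k) β γ' * N j γ' ω))) ∂μ)
      = Cb * (∑ α, ∑ β, η α β) + ((m k : ℝ) / v k) *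
          Real.log (Ifun σ η (v k * (CW / (m k : ℝ))) (psdSqrt (q k))) := by
    intro k
    have hYmeas : ∀ j, Measurable (fun ω γ => N j γ ω : Ω → A → ℝ) :=
      fun j => measurable_pi_lambda _ fun γ => hNmeas j γ
    have hGcont : Continuous (fun y : A → ℝ =>
        Real.exp ((v k * (CW / (m k : ℝ))) * Xfun σ η (psdSqrt (q k)) y)) :=
      Real.continuous_exp.comp (continuous_const.mul (Xfun_cont_z hσ _))
    have hpt : ∀ ω : Ω, Real.exp (v k * ∑ α, ∑ β, η α β *
          (Cb + CW / (m k : ℝ) * ∑ j ∈ Finset.range (m k),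
            σ (∑ γ', psdSqrt (q k) α γ' * N j γ' ω) *
            σ (∑ γ', psdSqrt (q k) β γ' * N j γ' ω)))
        = Real.exp (v k * Cb * (∑ α, ∑ β, η α β)) *
            ∏ j ∈ Finset.range (m k), Real.exp ((v k * (CW / (m k : ℝ))) *
              Xfun σ η (psdSqrt (q k)) (fun γ => N j γ ω)) := by
      intro ω
      have hXf : ∀ j : ℕ, (∑ α, ∑ β, η α β *
          (σ (∑ γ', psdSqrt (q k) α γ' * N j γ' ω) *
           σ (∑ γ', psdSqrt (q k) β γ' * N j γ' ω)))
          = Xfun σ η (psdSqrt (q k)) (fun γ => N j γ ω) := by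
        intro j
        unfold Xfun
        exact Finset.sum_congr rfl fun α _ => Finset.sum_congr rfl fun β _ =>
          (mul_assoc _ _ _).symm
      have hexp := scalar_expand (Finset.range (m k)) (v k) Cb (CW / (m k : ℝ)) η
        (fun j α β => σ (∑ γ', psdSqrt (q k) α γ' * N j γ' ω) *
          σ (∑ γ', psdSqrt (q k) β γ' * N j γ' ω))
      beta_reduce at hexp
      rw [hexp, Real.exp_add, Real.exp_sum]
      congr 1
      refine Finset.prod_congr rfl fun j _ => ?_
      rw [hXf j]
    have hindepH : iIndepFun
        (fun j ω => Real.exp ((v k * (CW / (m k : ℝ))) *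
          Xfun σ η (psdSqrt (q k)) (fun γ => N j γ ω))) μ :=
      (rows_iIndepFun N hNmeas hNindep).comp
        (fun _ => fun y => Real.exp ((v k * (CW / (m k : ℝ))) * Xfun σ η (psdSqrt (q k)) y))
        (fun _ => hGcont.measurable)
    have hHmeas : ∀ j, Measurable (fun ω => Real.exp ((v k * (CW / (m k : ℝ))) *
        Xfun σ η (psdSqrt (q k)) (fun γ => N j γ ω))) :=
      fun j => hGcont.measurable.comp (hYmeas j)
    have hfac : ∀ j, (∫ ω, Real.exp ((v k * (CW / (m k : ℝ))) *
          Xfun σ η (psdSqrt (q k)) (fun γ => N j γ ω)) ∂μ)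
        = Ifun σ η (v k * (CW / (m k : ℝ))) (psdSqrt (q k)) := by
      intro j
      have h1 := integral_map (φ := fun ω γ => N j γ ω) (μ := μ)
        (hYmeas j).aemeasurable
        (f := fun y => Real.exp ((v k * (CW / (m k : ℝ))) * Xfun σ η (psdSqrt (q k)) y))
        hGcont.aestronglyMeasurable
      rw [row_law N hNmeas hN hNindep j] at h1
      exact h1.symm
    have hint : (∫ ω, Real.exp (v k * ∑ α, ∑ β, η α β *
          (Cb + CW / (m k : ℝ) * ∑ j ∈ Finset.range (m k),
            σ (∑ γ', psdSqrt (q k) α γ' * N j γ' ω) *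
            σ (∑ γ', psdSqrt (q k) β γ' * N j γ' ω))) ∂μ)
        = Real.exp (v k * Cb * (∑ α, ∑ β, η α β)) *
            Ifun σ η (v k * (CW / (m k : ℝ))) (psdSqrt (q k)) ^ (m k) := by
      rw [integral_congr_ae (Filter.Eventually.of_forall hpt), integral_const_mul,
        integral_prod_range hindepH hHmeas (m k)]
      congr 1
      rw [Finset.prod_congr rfl fun j _ => hfac j, Finset.prod_const, Finset.card_range]
    rw [hint, Real.log_mul (Real.exp_ne_zero _) (pow_ne_zero _ (hIpos k).ne'),
      Real.log_exp, Real.log_pow]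
    have hvne : v k ≠ 0 := (hv k).ne'
    field_simp
  have hfinal : Filter.Tendsto (fun k => Cb * (∑ α, ∑ β, η α β) + ((m k : ℝ) / v k) *
        Real.log (Ifun σ η (v k * (CW / (m k : ℝ))) (psdSqrt (q k)))) Filter.atTop
      (nhds (Cb * (∑ α, ∑ β, η α β)
        + γ * Real.log (Ifun σ η (CW / γ) (psdSqrt qlim)))) :=
    tendsto_const_nhds.add (hmv.mul
      (((Real.continuousAt_log hIlimpos.ne').tendsto).comp hItend))
  rw [kappaFn_eq_log_Ifun σ (CW / γ) η qlim]
  exact hfinal.congr (fun k => (key k).symm)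
end

section
/- For q > 0 and y > 0, letting z := f^{−1}(y/q) be the unique positive solution of z³/(z+1) = y/q, the Legendre transform of the ReLU cumulant generating function has the explicit expression κ*(y;q) = ((1 − z^{−2})/(2q)) · y − log((z + 1)/2). -/
open MeasureTheory ProbabilityTheory
open scoped ENNReal

/-- `E[exp(η σ(√q N)²)] ∈ [0,∞]`, where `σ(x) = max{x,0}` is the ReLU function and `N` is
a standard Normal random variable. -/
noncomputable def reluMGF (η q : ℝ) : ℝ≥0∞ :=
  ∫⁻ x, ENNReal.ofReal (Real.exp (η * max (Real.sqrt q * x) 0 ^ 2))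
    ∂(gaussianReal 0 1)

/-- `κ(η;q) := log E[exp(η σ(√q N)²)] ∈ (−∞,∞]` for the ReLU function `σ(x) = max{x,0}`. -/
noncomputable def reluKappa (η q : ℝ) : EReal :=
  (reluMGF η q).log

/-- The Fenchel–Legendre transform `κ*(y;q) := sup_{η∈ℝ} {ηy − κ(η;q)}`,
with values in `EReal`. -/
noncomputable def reluKappaStar (y q : ℝ) : EReal :=
  ⨆ η : ℝ, ((η * y : ℝ) : EReal) - reluKappa η q

section Aux

open Real Set

lemma relu_max_sq (q : ℝ) (hq : 0 ≤ q) (x : ℝ) :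
    max (Real.sqrt q * x) 0 ^ 2 = q * max x 0 ^ 2 := by
  rcases le_or_gt x 0 with h | h
  · rw [max_eq_right (mul_nonpos_of_nonneg_of_nonpos (Real.sqrt_nonneg q) h), max_eq_right h]
    ring
  · rw [max_eq_left (mul_nonneg (Real.sqrt_nonneg q) h.le), max_eq_left h.le]
    rw [mul_pow, Real.sq_sqrt hq]

lemma reluMGF_eq (η q : ℝ) (hq : 0 ≤ q) :
    reluMGF η q
      = ∫⁻ x, ENNReal.ofReal ((Real.sqrt (2 * π))⁻¹
          * Real.exp (-(if 0 < x then (1/2 - η * q) else 1/2) * x ^ 2)) := by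
  rw [reluMGF, gaussianReal_of_var_ne_zero 0 one_ne_zero,
    lintegral_withDensity_eq_lintegral_mul _ (measurable_gaussianPDF 0 1)
      (by fun_prop)]
  congr 1
  ext x
  simp only [Pi.mul_apply, gaussianPDF, relu_max_sq q hq x]
  rw [← ENNReal.ofReal_mul (gaussianPDFReal_nonneg 0 1 x)]
  congr 1
  rw [gaussianPDFReal]
  push_cast
  rw [mul_one, mul_assoc, ← Real.exp_add]
  congr 2
  split_ifs with h
  · rw [max_eq_left h.le]; ring
  · rw [max_eq_right (not_lt.mp h)]; ring

lemma reluMGF_of_lt (η q : ℝ) (hq : 0 < q) (hη : 2 * η * q < 1) :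
    reluMGF η q = ENNReal.ofReal ((1 + (Real.sqrt (1 - 2 * η * q))⁻¹) / 2) := by
  have hb : (0:ℝ) < 1/2 - η * q := by linarith
  set g : ℝ → ℝ := fun x => (Real.sqrt (2 * π))⁻¹
      * Real.exp (-(if 0 < x then (1/2 - η * q) else 1/2) * x ^ 2) with hg
  have hgm : Measurable g := by
    apply Measurable.const_mul
    apply Real.measurable_exp.comp
    apply Measurable.mul _ (by fun_prop)
    apply Measurable.neg
    exact Measurable.ite measurableSet_Ioi measurable_const measurable_const
  have hgnn : ∀ x, 0 ≤ g x := fun x =>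
    mul_nonneg (inv_nonneg.mpr (Real.sqrt_nonneg _)) (Real.exp_nonneg _)
  have hInt : Integrable g := by
    have h1 : Integrable (fun x : ℝ => (Real.sqrt (2*π))⁻¹
        * (Real.exp (-(1/2) * x^2) + Real.exp (-(1/2 - η*q) * x^2))) :=
      ((integrable_exp_neg_mul_sq (by norm_num : (0:ℝ) < 1/2)).add
        (integrable_exp_neg_mul_sq hb)).const_mul _
    refine h1.mono' hgm.aestronglyMeasurable (Filter.Eventually.of_forall fun x => ?_)
    rw [Real.norm_of_nonneg (hgnn x), hg]
    simp only
    split_ifs with h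
    · have : (0:ℝ) ≤ Real.exp (-(1/2) * x^2) := Real.exp_nonneg _
      have h2 : (0:ℝ) ≤ (Real.sqrt (2*π))⁻¹ := inv_nonneg.mpr (Real.sqrt_nonneg _)
      nlinarith
    · have : (0:ℝ) ≤ Real.exp (-(1/2 - η*q) * x^2) := Real.exp_nonneg _
      have h2 : (0:ℝ) ≤ (Real.sqrt (2*π))⁻¹ := inv_nonneg.mpr (Real.sqrt_nonneg _)
      nlinarith
  rw [reluMGF_eq η q hq.le, ← ofReal_integral_eq_lintegral_ofReal hInt
    (Filter.Eventually.of_forall hgnn)]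
  congr 1
  have hsplit : (∫ x in Ioi (0:ℝ), g x) + ∫ x in (Ioi (0:ℝ))ᶜ, g x = ∫ x, g x :=
    integral_add_compl measurableSet_Ioi hInt
  rw [← hsplit, compl_Ioi]
  have hIoi : (∫ x in Ioi (0:ℝ), g x)
      = (Real.sqrt (2*π))⁻¹ * (Real.sqrt (π / (1/2 - η*q)) / 2) := by
    rw [← integral_gaussian_Ioi (1/2 - η*q), ← integral_const_mul]
    refine setIntegral_congr_fun measurableSet_Ioi fun x hx => ?_
    rw [hg]; simp only [if_pos (mem_Ioi.mp hx)]
  have hIic : (∫ x in Iic (0:ℝ), g x)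
      = (Real.sqrt (2*π))⁻¹ * (Real.sqrt (π / (1/2)) / 2) := by
    have : (∫ x in Iic (0:ℝ), g x)
        = ∫ x in Iic (0:ℝ), (Real.sqrt (2*π))⁻¹ * Real.exp (-(1/2) * x^2) := by
      refine setIntegral_congr_fun measurableSet_Iic fun x hx => ?_
      rw [hg]; simp only [if_neg (not_lt.mpr (mem_Iic.mp hx))]
    rw [this]
    have hneg : (∫ x in Iic (0:ℝ), (Real.sqrt (2*π))⁻¹ * Real.exp (-(1/2) * x^2))
        = ∫ x in Ioi (-(0:ℝ)), (Real.sqrt (2*π))⁻¹ * Real.exp (-(1/2) * x^2) := by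
      rw [← integral_comp_neg_Iic]
      simp [neg_sq]
    rw [hneg, neg_zero, integral_const_mul, integral_gaussian_Ioi]
  rw [hIoi, hIic]
  have h2π : Real.sqrt (2*π) ≠ 0 := by positivity
  have hs1 : (Real.sqrt (2*π))⁻¹ * (Real.sqrt (π / (1/2)) / 2) = 1/2 := by
    rw [show π / (1/2 : ℝ) = 2 * π by ring, eq_div_iff (two_ne_zero)]
    field_simp
  have hs2 : (Real.sqrt (2*π))⁻¹ * (Real.sqrt (π / (1/2 - η*q)) / 2)
      = (Real.sqrt (1 - 2*η*q))⁻¹ / 2 := by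
    have h12 : (0:ℝ) < 1 - 2*η*q := by linarith
    rw [show π / (1/2 - η*q) = (2*π) / (1 - 2*η*q) by rw [div_eq_div_iff hb.ne' h12.ne']; ring,
      Real.sqrt_div (by positivity : (0:ℝ) ≤ 2*π)]
    have hs : Real.sqrt (1 - 2*η*q) ≠ 0 := by positivity
    field_simp
  rw [hs1, hs2]; ring

lemma reluMGF_of_ge (η q : ℝ) (hq : 0 < q) (hη : 1 ≤ 2 * η * q) :
    reluMGF η q = ⊤ := by
  rw [reluMGF_eq η q hq.le]
  refine top_unique ?_
  calc (⊤:ℝ≥0∞) = ∫⁻ _ in Ioi (0:ℝ), ENNReal.ofReal ((Real.sqrt (2*π))⁻¹) := by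
        rw [setLIntegral_const, Real.volume_Ioi, ENNReal.mul_top]
        simp only [ne_eq, ENNReal.ofReal_eq_zero, not_le]
        positivity
    _ ≤ ∫⁻ x in Ioi (0:ℝ), ENNReal.ofReal ((Real.sqrt (2*π))⁻¹
          * Real.exp (-(if 0 < x then (1/2 - η * q) else 1/2) * x ^ 2)) := by
        refine setLIntegral_mono (ENNReal.measurable_ofReal.comp ((measurable_const.mul
          (Real.measurable_exp.comp (((Measurable.ite measurableSet_Ioi measurable_const
            measurable_const).neg).mul (by fun_prop)))))) fun x hx => ?_
        refine ENNReal.ofReal_le_ofReal ?_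
        rw [if_pos (mem_Ioi.mp hx)]
        nth_rewrite 1 [show ((Real.sqrt (2*π))⁻¹ : ℝ) = (Real.sqrt (2*π))⁻¹ * Real.exp 0 by
          rw [Real.exp_zero, mul_one]]
        refine mul_le_mul_of_nonneg_left (Real.exp_le_exp.mpr ?_)
          (inv_nonneg.mpr (Real.sqrt_nonneg _))
        nlinarith [sq_nonneg x]
    _ ≤ _ := setLIntegral_le_lintegral _ _

lemma key_ineq (q y z t : ℝ) (hq : 0 < q) (hz : 0 < z) (ht : 0 < t)
    (hfz : z ^ 3 / (z + 1) = y / q) :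
    (1 - t⁻¹ ^ 2) / (2 * q) * y - Real.log ((1 + t) / 2)
      ≤ (1 - (z ^ 2)⁻¹) / (2 * q) * y - Real.log ((z + 1) / 2) := by
  have hz1 : (0:ℝ) < z + 1 := by linarith
  have ht1 : (0:ℝ) < 1 + t := by linarith
  have hyq : y = q * (z ^ 3 / (z + 1)) := by
    rw [hfz]; field_simp
  have A : (t⁻¹^2 - (z^2)⁻¹) * y / (2*q) - (z - t)/(1 + t)
      = (z - t)^2 * ((z + 2) * t + z) / (2 * (z+1) * t^2 * (1+t)) := by
    rw [hyq]
    field_simp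
    ring
  have A' : (0:ℝ) ≤ (t⁻¹^2 - (z^2)⁻¹) * y / (2*q) - (z - t)/(1 + t) := by
    rw [A]; positivity
  have B : Real.log ((1 + z)/(1 + t)) ≤ (1 + z)/(1 + t) - 1 :=
    Real.log_le_sub_one_of_pos (by positivity)
  have B' : (1 + z)/(1 + t) - 1 = (z - t)/(1 + t) := by field_simp; ring
  have C1 : Real.log ((1 + z)/(1 + t)) = Real.log (1 + z) - Real.log (1 + t) :=
    Real.log_div (by positivity) (by positivity)
  have C2 : Real.log ((z + 1)/2) = Real.log (1 + z) - Real.log 2 := by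
    rw [Real.log_div (by positivity) (by norm_num), add_comm]
  have C3 : Real.log ((1 + t)/2) = Real.log (1 + t) - Real.log 2 := by
    rw [Real.log_div (by positivity) (by norm_num)]
  have hD : (1 - (z^2)⁻¹)/(2*q) * y - (1 - t⁻¹^2)/(2*q) * y
      = (t⁻¹^2 - (z^2)⁻¹) * y / (2*q) := by ring
  linarith

end Aux

/-- For `q > 0` and `y > 0`, letting `z = f⁻¹(y/q)` be the unique
positive solution of `z³/(z+1) = y/q`, the Legendre transform of the ReLU cumulant
generating function is `κ*(y;q) = ((1 − z⁻²)/(2q)) y − log((z+1)/2)`. -/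
theorem reluKappaStar_explicit (q y z : ℝ) (hq : 0 < q) (hy : 0 < y) (hz : 0 < z)
    (hfz : z ^ 3 / (z + 1) = y / q) :
    reluKappaStar y q
      = (((1 - (z ^ 2)⁻¹) / (2 * q) * y - Real.log ((z + 1) / 2) : ℝ) : EReal) := by
  rw [reluKappaStar]
  apply le_antisymm
  · refine iSup_le fun η => ?_
    rcases lt_or_ge (2 * η * q) 1 with hη | hη
    · -- finite case
      have h12 : (0:ℝ) < 1 - 2*η*q := by linarith
      set t : ℝ := (Real.sqrt (1 - 2*η*q))⁻¹ with htdef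
      have ht : 0 < t := inv_pos.mpr (Real.sqrt_pos.mpr h12)
      have htinv : t⁻¹ ^ 2 = 1 - 2*η*q := by
        rw [htdef, inv_inv, Real.sq_sqrt h12.le]
      have hηt : η = (1 - t⁻¹^2) / (2*q) := by
        rw [htinv]; field_simp; ring
      have hpos : (0:ℝ) < (1 + t)/2 := by linarith
      rw [reluKappa, reluMGF_of_lt η q hq hη,
        ENNReal.log_ofReal_of_pos hpos, ← EReal.coe_sub]
      rw [EReal.coe_le_coe_iff]
      calc η * y - Real.log ((1 + t)/2)
          = (1 - t⁻¹^2) / (2*q) * y - Real.log ((1 + t)/2) := by rw [← hηt]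
        _ ≤ _ := key_ineq q y z t hq hz ht hfz
    · -- infinite case : term is ⊥
      rw [reluKappa, reluMGF_of_ge η q hq hη]
      simp
  · -- attained at η₀
    set η₀ : ℝ := (1 - (z^2)⁻¹) / (2*q) with hη₀
    have hη₀lt : 2 * η₀ * q < 1 := by
      have hzi : (0:ℝ) < (z^2)⁻¹ := by positivity
      rw [hη₀]
      rw [show 2 * ((1 - (z^2)⁻¹) / (2*q)) * q = 1 - (z^2)⁻¹ by field_simp]
      linarith
    have hsqrt : Real.sqrt (1 - 2*η₀*q) = z⁻¹ := by
      rw [show 1 - 2*η₀*q = (z^2)⁻¹ by rw [hη₀]; field_simp; ring,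
        show ((z:ℝ)^2)⁻¹ = (z⁻¹)^2 by rw [inv_pow],
        Real.sqrt_sq (by positivity)]
    have hval : ((η₀ * y : ℝ) : EReal) - reluKappa η₀ q
        = (((1 - (z ^ 2)⁻¹) / (2 * q) * y - Real.log ((z + 1) / 2) : ℝ) : EReal) := by
      rw [reluKappa, reluMGF_of_lt η₀ q hq hη₀lt, hsqrt, inv_inv,
        ENNReal.log_ofReal_of_pos (by linarith : (0:ℝ) < (1 + z)/2), ← EReal.coe_sub]
      rw [EReal.coe_eq_coe_iff, hη₀, add_comm]
    rw [← hval]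
    exact le_iSup (fun η => ((η * y : ℝ) : EReal) - reluKappa η q) η₀
end
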